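/- Let (H,R) be a braided bialgebra over a field k with R = Σ s_i⊗t_i, let φ : H → H be a bialgebra automorphism with (φ⊗φ)(R) = R, and let K ∈ H be an invertible element satisfying Δ(K) = (K⊗1)·(id⊗φ)(R)·(1⊗K)·R_21. For a left H-module M let M^φ denote the H-module with the same underlying space and action h·_φ m = φ(h)·m. For left H-modules P and Q define ĉ_{P,Q} : P⊗Q → Q⊗P by ĉ_{P,Q}(p⊗q) = Σ (s_i·q)⊗(t_i·p), where the actions are those of the given module structures, and let k_M : M → M denote the action of K. Then for all left H-modules M,N the φ-twisted reflection equation holds as an identity of k-linear maps M⊗N → M⊗N: (k_M⊗id_N)∘ĉ_{N^φ,M}∘(k_N⊗id_M)∘ĉ_{M,N} = ĉ_{N^φ,M^φ}∘(k_N⊗id_M)∘ĉ_{M^φ,N}∘(k_M⊗id_N). -/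

import Mathlib

/- Braided bialgebras: basic tensor-leg maps and the universal R-matrix axioms. -/

open scoped TensorProduct

noncomputable section

variable (k H : Type*) [Field k] [Ring H] [Bialgebra k H]

/-- The flip `a ⊗ b ↦ b ⊗ a` on `H ⊗[k] H`, as an algebra homomorphism. -/
def tflip : H ⊗[k] H →ₐ[k] H ⊗[k] H := (Algebra.TensorProduct.comm k H H).toAlgHom

/-- `s ⊗ t ↦ s ⊗ t ⊗ 1 : H ⊗ H → H ⊗ H ⊗ H`. -/
def leg12 : H ⊗[k] H →ₐ[k] H ⊗[k] (H ⊗[k] H) :=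
  Algebra.TensorProduct.map (AlgHom.id k H) Algebra.TensorProduct.includeLeft

/-- `s ⊗ t ↦ s ⊗ 1 ⊗ t : H ⊗ H → H ⊗ H ⊗ H`. -/
def leg13 : H ⊗[k] H →ₐ[k] H ⊗[k] (H ⊗[k] H) :=
  Algebra.TensorProduct.map (AlgHom.id k H) Algebra.TensorProduct.includeRight

/-- `s ⊗ t ↦ 1 ⊗ s ⊗ t : H ⊗ H → H ⊗ H ⊗ H`. -/
def leg23 : H ⊗[k] H →ₐ[k] H ⊗[k] (H ⊗[k] H) :=
  Algebra.TensorProduct.includeRight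

/-- `Δ ⊗ id : H ⊗ H → H ⊗ H ⊗ H`. -/
def comulLeft : H ⊗[k] H →ₐ[k] H ⊗[k] (H ⊗[k] H) :=
  (Algebra.TensorProduct.assoc k k k H H H).toAlgHom.comp
    (Algebra.TensorProduct.map (Bialgebra.comulAlgHom k H) (AlgHom.id k H))

/-- `id ⊗ Δ : H ⊗ H → H ⊗ H ⊗ H`. -/
def comulRight : H ⊗[k] H →ₐ[k] H ⊗[k] (H ⊗[k] H) :=
  Algebra.TensorProduct.map (AlgHom.id k H) (Bialgebra.comulAlgHom k H)

/-- `(H, R)` is a braided bialgebra with `R⁻¹ = Rinv`:  `R` is an invertible element of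
`H ⊗ H` satisfying `Δ(x) · R = R · Δ^op(x)` for all `x` and the two hexagon identities
`(Δ ⊗ id)(R) = R₂₃ · R₁₃` and `(id ⊗ Δ)(R) = R₁₂ · R₁₃`. -/
def IsUniversalRMatrix (R Rinv : H ⊗[k] H) : Prop :=
  R * Rinv = 1 ∧ Rinv * R = 1 ∧
  (∀ x : H, Bialgebra.comulAlgHom k H x * R = R * tflip k H (Bialgebra.comulAlgHom k H x)) ∧
  comulLeft k H R = leg23 k H R * leg13 k H R ∧
  comulRight k H R = leg12 k H R * leg13 k H R

/-- The action of an element `z = Σ sᵢ ⊗ tᵢ` of `H ⊗ H` on `M ⊗ N`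
(first leg acting on `M`, second leg acting on `N`). -/
def act2 (M N : Type*) [AddCommGroup M] [Module k M] [Module H M]
    [IsScalarTower k H M] [SMulCommClass H k M]
    [AddCommGroup N] [Module k N] [Module H N]
    [IsScalarTower k H N] [SMulCommClass H k N]
    (z : H ⊗[k] H) : M ⊗[k] N →ₗ[k] M ⊗[k] N :=
  TensorProduct.homTensorHomMap (RingHom.id k) M N M N
    (TensorProduct.map (Algebra.lsmul k k M (A := H)).toLinearMap
      (Algebra.lsmul k k N (A := H)).toLinearMap z)

/-- The braiding-type map `M ⊗ N → N ⊗ M` determined by `z = Σ sᵢ ⊗ tᵢ ∈ H ⊗ H`: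
`m ⊗ n ↦ Σ (sᵢ · n) ⊗ (tᵢ · m)`. -/
def braidMap (M N : Type*) [AddCommGroup M] [Module k M] [Module H M]
    [IsScalarTower k H M] [SMulCommClass H k M]
    [AddCommGroup N] [Module k N] [Module H N]
    [IsScalarTower k H N] [SMulCommClass H k N]
    (z : H ⊗[k] H) : M ⊗[k] N →ₗ[k] N ⊗[k] M :=
  (act2 k H N M z).comp (TensorProduct.comm k M N).toLinearMap

/-- The `k`-linear endomorphism of `M` given by the action of `K ∈ H`. -/
def actK (M : Type*) [AddCommGroup M] [Module k M] [Module H M]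
    [IsScalarTower k H M] [SMulCommClass H k M]
    (K : H) : M →ₗ[k] M :=
  Algebra.lsmul k k M (A := H) K

section Helpers

variable (M N : Type*) [AddCommGroup M] [Module k M] [Module H M]
    [IsScalarTower k H M] [SMulCommClass H k M]
    [AddCommGroup N] [Module k N] [Module H N]
    [IsScalarTower k H N] [SMulCommClass H k N]

lemma act2_tmul (s t : H) :
    act2 k H M N (s ⊗ₜ[k] t)
      = TensorProduct.map ((Algebra.lsmul k k M (A := H)) s)
          ((Algebra.lsmul k k N (A := H)) t) := by
  simp [act2]

lemma act2_add (x y : H ⊗[k] H) :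
    act2 k H M N (x + y) = act2 k H M N x + act2 k H M N y := by
  simp only [act2, map_add]

lemma act2_eq (z : H ⊗[k] H) :
    act2 k H M N z =
      ((Module.endTensorEndAlgHom (R := k) (S := k) (A := k) (M := M) (N := N)).comp
        (Algebra.TensorProduct.map (Algebra.lsmul k k M (A := H))
          (Algebra.lsmul k k N (A := H)))) z := by
  induction z using TensorProduct.induction_on with
  | zero => simp [act2]
  | tmul s t =>
      ext m n
      simp [act2_tmul, Module.endTensorEndAlgHom_apply]
  | add x y hx hy =>
      simp only [map_add, act2_add, hx, hy]

lemma act2_mul (z w : H ⊗[k] H) :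
    act2 k H M N (z * w) = (act2 k H M N z).comp (act2 k H M N w) := by
  simp only [act2_eq, map_mul]
  rfl

lemma tflip_tmul (a b : H) : tflip k H (a ⊗ₜ[k] b) = b ⊗ₜ[k] a := rfl

lemma tflip_tflip (z : H ⊗[k] H) : tflip k H (tflip k H z) = z := by
  induction z using TensorProduct.induction_on with
  | zero => simp
  | tmul s t => simp [tflip_tmul]
  | add x y hx hy => simp [map_add, hx, hy]

lemma comm_comp_act2 (z : H ⊗[k] H) :
    (act2 k H N M (tflip k H z)).comp (TensorProduct.comm k M N).toLinearMap
      = ((TensorProduct.comm k M N).toLinearMap).comp (act2 k H M N z) := by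
  induction z using TensorProduct.induction_on with
  | zero => simp [act2]
  | tmul s t =>
      ext m n
      simp [tflip_tmul, act2_tmul]
  | add x y hx hy =>
      simp only [map_add, act2_add, LinearMap.add_comp, LinearMap.comp_add, hx, hy]

lemma comm_act2_reassoc {X : Type*} [AddCommGroup X] [Module k X]
    (z : H ⊗[k] H) (f : X →ₗ[k] M ⊗[k] N) :
    ((TensorProduct.comm k M N).toLinearMap).comp ((act2 k H M N z).comp f)
      = (act2 k H N M (tflip k H z)).comp
          (((TensorProduct.comm k M N).toLinearMap).comp f) := by
  rw [← LinearMap.comp_assoc, ← comm_comp_act2, LinearMap.comp_assoc]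

lemma comm_comp_comm :
    ((TensorProduct.comm k N M).toLinearMap).comp ((TensorProduct.comm k M N).toLinearMap)
      = LinearMap.id := by
  ext m n
  simp

lemma comm_comm_reassoc {X : Type*} [AddCommGroup X] [Module k X]
    (f : X →ₗ[k] M ⊗[k] N) :
    ((TensorProduct.comm k N M).toLinearMap).comp
        (((TensorProduct.comm k M N).toLinearMap).comp f) = f := by
  rw [← LinearMap.comp_assoc, comm_comp_comm, LinearMap.id_comp]

lemma map_actK_eq (h : H) :
    TensorProduct.map (actK k H M h) (LinearMap.id (M := N))
      = act2 k H M N (h ⊗ₜ[k] (1 : H)) := by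
  ext m n
  simp [actK, act2_tmul]

end Helpers

/-- let `(H, R)` be a braided bialgebra, `φ` an automorphism of braided
bialgebras (so `(φ ⊗ φ)(R) = R`), and `K ∈ H` invertible with
`Δ(K) = (K ⊗ 1) · (id ⊗ φ)(R) · (1 ⊗ K) · R₂₁`.  Then for all left `H`-modules `M, N`
the `φ`-twisted reflection equation holds on `M ⊗ N`:
`(k_M ⊗ id) ∘ ĉ_{N^φ,M} ∘ (k_N ⊗ id) ∘ ĉ_{M,N}
   = ĉ_{N^φ,M^φ} ∘ (k_N ⊗ id) ∘ ĉ_{M^φ,N} ∘ (k_M ⊗ id)`,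
where the braidings involving a twisted module `P^φ` are obtained by composing the
corresponding leg of `R` with `φ`:  `ĉ_{N^φ,M} = braidMap N M ((id ⊗ φ)(R))`,
`ĉ_{M^φ,N} = braidMap M N ((id ⊗ φ)(R))` and `ĉ_{N^φ,M^φ} = braidMap N M ((φ ⊗ φ)(R))`. -/
theorem twisted_reflection_equation_on_modules
    (R Rinv : H ⊗[k] H) (hR : IsUniversalRMatrix k H R Rinv)
    (φ : H ≃ₐc[k] H)
    (hφR : Algebra.TensorProduct.map (φ.toBialgHom : H →ₐ[k] H)
      (φ.toBialgHom : H →ₐ[k] H) R = R)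
    (K Kinv : H) (hK : K * Kinv = 1) (hK' : Kinv * K = 1)
    (hΔK : Bialgebra.comulAlgHom k H K =
      (K ⊗ₜ[k] (1 : H)) *
        Algebra.TensorProduct.map (AlgHom.id k H) (φ.toBialgHom : H →ₐ[k] H) R *
        ((1 : H) ⊗ₜ[k] K) * tflip k H R)
    (M N : Type*) [AddCommGroup M] [Module k M] [Module H M]
    [IsScalarTower k H M] [SMulCommClass H k M]
    [AddCommGroup N] [Module k N] [Module H N]
    [IsScalarTower k H N] [SMulCommClass H k N] :
    (TensorProduct.map (actK k H M K) LinearMap.id).comp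
        ((braidMap k H N M
            (Algebra.TensorProduct.map (AlgHom.id k H) (φ.toBialgHom : H →ₐ[k] H) R)).comp
          ((TensorProduct.map (actK k H N K) LinearMap.id).comp (braidMap k H M N R)))
      = (braidMap k H N M
            (Algebra.TensorProduct.map (φ.toBialgHom : H →ₐ[k] H)
              (φ.toBialgHom : H →ₐ[k] H) R)).comp
          ((TensorProduct.map (actK k H N K) LinearMap.id).comp
            ((braidMap k H M N
                (Algebra.TensorProduct.map (AlgHom.id k H)
                  (φ.toBialgHom : H →ₐ[k] H) R)).comp
              (TensorProduct.map (actK k H M K) LinearMap.id))) := by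
  obtain ⟨hRR, -, hcomm, -, -⟩ := hR
  set w := Algebra.TensorProduct.map (AlgHom.id k H) (φ.toBialgHom : H →ₐ[k] H) R with hw
  have e1 : tflip k H ((Bialgebra.comulAlgHom k H) K)
      = ((1 : H) ⊗ₜ[k] K) * (tflip k H w * ((K ⊗ₜ[k] (1 : H)) * R)) := by
    rw [hΔK]
    simp only [map_mul, tflip_tmul, tflip_tflip, mul_assoc]
  have e2 : (Bialgebra.comulAlgHom k H) K
      = R * (((1 : H) ⊗ₜ[k] K) * (tflip k H w * (K ⊗ₜ[k] (1 : H)))) := by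
    have h1 := hcomm K
    rw [e1] at h1
    calc (Bialgebra.comulAlgHom k H) K
        = (Bialgebra.comulAlgHom k H) K * R * Rinv := by rw [mul_assoc, hRR, mul_one]
      _ = (R * (((1 : H) ⊗ₜ[k] K) * (tflip k H w * ((K ⊗ₜ[k] (1 : H)) * R)))) * Rinv := by
          rw [h1]
      _ = R * (((1 : H) ⊗ₜ[k] K) * (tflip k H w * ((K ⊗ₜ[k] (1 : H)) * (R * Rinv)))) := by
          simp only [mul_assoc]
      _ = _ := by rw [hRR, mul_one]
  have key : (K ⊗ₜ[k] (1 : H)) * (w * (((1 : H) ⊗ₜ[k] K) * tflip k H R))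
      = Algebra.TensorProduct.map (φ.toBialgHom : H →ₐ[k] H) (φ.toBialgHom : H →ₐ[k] H) R
          * (((1 : H) ⊗ₜ[k] K) * (tflip k H w * (K ⊗ₜ[k] (1 : H)))) := by
    rw [hφR]
    have h2 := hΔK
    simp only [mul_assoc] at h2
    rw [← h2, e2]
  simp only [map_actK_eq, braidMap, LinearMap.comp_assoc, comm_act2_reassoc,
    comm_comm_reassoc, comm_comp_comm, LinearMap.comp_id, tflip_tmul, ← act2_mul]
  rw [key]
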